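/- arXiv:2011.06907 — 2 statements merged into one kernel-verified Lean document; each statement's English description precedes it below -/
import Mathlib

section
/- For any even integer N ≥ 2, the function v(x) = -(1/γ²)(−1/(8N²) + x²/2 + ∑_{k=1}^{N} (-1)^k (x - x_k)² H(x - x_k)), with x_k = (2k-1)/(2N), satisfies v(0) = v(1), v'(0) = v'(1) = 0, and ∫_0^1 v(x) dx = 0. -/
lemma combo_sum (M : ℕ) (a b c d : ℝ) :
    ∑ k ∈ Finset.Icc 1 (2*M), (-1:ℝ)^k *
      (a + b*(2*(k:ℝ)-1) + c*(2*(k:ℝ)-1)^2 + d*(2*(k:ℝ)-1)^3)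
    = b*(2*(M:ℝ)) + c*(2*(2*(M:ℝ))^2) + d*(4*(2*(M:ℝ))^3 - 3*(2*(M:ℝ))) := by
  induction M with
  | zero => simp
  | succ m ih =>
    have h1 : 2*(m+1) = (2*m+1)+1 := by ring
    rw [h1, Finset.sum_Icc_succ_top (by omega), Finset.sum_Icc_succ_top (by omega), ih]
    have e1 : (-1:ℝ)^(2*m+1) = -1 := Odd.neg_one_pow ⟨m, by ring⟩
    have e2 : (-1:ℝ)^(2*m+1+1) = 1 := Even.neg_one_pow ⟨m+1, by ring⟩
    rw [e1, e2]
    push_cast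
    ring

theorem stmt_3 (γ : ℝ) (hγ : 0 < γ) (N : ℕ) (hN : 2 ≤ N) (hNe : Even N)
    (H : ℝ → ℝ) (hH : ∀ t, H t = if 0 ≤ t then 1 else 0)
    (v : ℝ → ℝ)
    (hv : ∀ x, v x = -(1 / γ ^ 2) * (-(1 / (8 * (N : ℝ) ^ 2)) + x ^ 2 / 2 +
      ∑ k ∈ Finset.Icc 1 N,
        (-1 : ℝ) ^ k * (x - (2 * (k : ℝ) - 1) / (2 * N)) ^ 2
          * H (x - (2 * (k : ℝ) - 1) / (2 * N)))) :
    v 0 = v 1 ∧ deriv v 0 = 0 ∧ deriv v 1 = 0 ∧ ∫ x in (0:ℝ)..1, v x = 0 := by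
  obtain ⟨M, hM⟩ := hNe
  have hMN : N = 2 * M := by omega
  have hN0 : (N:ℝ) ≠ 0 := Nat.cast_ne_zero.mpr (by omega)
  have hNpos : (0:ℝ) < N := by exact_mod_cast (by omega : 0 < N)
  have hMR : 2*(M:ℝ) = (N:ℝ) := by rw [hMN]; push_cast; ring
  -- the three key sum identities
  have hsum1 : ∑ k ∈ Finset.Icc 1 N, (-1:ℝ)^k * (1 - (2*(k:ℝ)-1)/(2*N)) = -1/2 := by
    rw [show (∑ k ∈ Finset.Icc 1 N, (-1:ℝ)^k * (1 - (2*(k:ℝ)-1)/(2*N)))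
        = ∑ k ∈ Finset.Icc 1 (2*M), (-1:ℝ)^k *
          (1 + (-(1/(2*(N:ℝ))))*(2*(k:ℝ)-1) + 0*(2*(k:ℝ)-1)^2 + 0*(2*(k:ℝ)-1)^3) from by
      rw [← hMN]; exact Finset.sum_congr rfl fun k _ => by field_simp; ring]
    rw [combo_sum, hMR]; field_simp; ring
  have hsum2 : ∑ k ∈ Finset.Icc 1 N, (-1:ℝ)^k * (1 - (2*(k:ℝ)-1)/(2*N))^2 = -1/2 := by
    rw [show (∑ k ∈ Finset.Icc 1 N, (-1:ℝ)^k * (1 - (2*(k:ℝ)-1)/(2*N))^2)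
        = ∑ k ∈ Finset.Icc 1 (2*M), (-1:ℝ)^k *
          (1 + (-(1/(N:ℝ)))*(2*(k:ℝ)-1) + (1/(4*(N:ℝ)^2))*(2*(k:ℝ)-1)^2 + 0*(2*(k:ℝ)-1)^3) from by
      rw [← hMN]; exact Finset.sum_congr rfl fun k _ => by field_simp; ring]
    rw [combo_sum, hMR]; field_simp; ring
  have hsum3 : ∑ k ∈ Finset.Icc 1 N, (-1:ℝ)^k * (1 - (2*(k:ℝ)-1)/(2*N))^3
      = -1/2 + 3/(8*(N:ℝ)^2) := by
    rw [show (∑ k ∈ Finset.Icc 1 N, (-1:ℝ)^k * (1 - (2*(k:ℝ)-1)/(2*N))^3)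
        = ∑ k ∈ Finset.Icc 1 (2*M), (-1:ℝ)^k *
          (1 + (-(3/(2*(N:ℝ))))*(2*(k:ℝ)-1) + (3/(4*(N:ℝ)^2))*(2*(k:ℝ)-1)^2
            + (-(1/(8*(N:ℝ)^3)))*(2*(k:ℝ)-1)^3) from by
      rw [← hMN]; exact Finset.sum_congr rfl fun k _ => by field_simp; ring]
    rw [combo_sum, hMR]; field_simp; ring
  -- basic facts about the nodes
  have hxk_pos : ∀ k ∈ Finset.Icc 1 N, (0:ℝ) < (2*(k:ℝ)-1)/(2*N) := by
    intro k hk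
    obtain ⟨hk1, hk2⟩ := Finset.mem_Icc.mp hk
    have : (1:ℝ) ≤ (k:ℝ) := by exact_mod_cast hk1
    exact div_pos (by linarith) (by linarith)
  have hxk_le : ∀ k ∈ Finset.Icc 1 N, (2*(k:ℝ)-1)/(2*N) ≤ 1 := by
    intro k hk
    obtain ⟨hk1, hk2⟩ := Finset.mem_Icc.mp hk
    have : (k:ℝ) ≤ (N:ℝ) := by exact_mod_cast hk2
    rw [div_le_one (by linarith)]; linarith
  have hH0 : ∀ t : ℝ, t < 0 → H t = 0 := by
    intro t ht; rw [hH, if_neg (not_le.mpr ht)]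
  have hH1 : ∀ t : ℝ, 0 ≤ t → H t = 1 := by
    intro t ht; rw [hH, if_pos ht]
  -- values at the endpoints
  have hv0 : v 0 = -(1 / γ ^ 2) * (-(1 / (8 * (N : ℝ) ^ 2))) := by
    rw [hv 0]
    rw [Finset.sum_eq_zero (fun k hk => by
      rw [hH0 _ (by linarith [hxk_pos k hk]), mul_zero])]
    ring
  have hv1 : v 1 = -(1 / γ ^ 2) * (-(1 / (8 * (N : ℝ) ^ 2))) := by
    rw [hv 1]
    rw [Finset.sum_congr rfl (fun k hk => by
      rw [hH1 _ (by linarith [hxk_le k hk]), mul_one])]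
    rw [hsum2]
    ring
  refine ⟨hv0.trans hv1.symm, ?_, ?_, ?_⟩
  · -- derivative at 0
    have hmem : Set.Iio ((1:ℝ)/(2*N)) ∈ nhds (0:ℝ) := Iio_mem_nhds (by positivity)
    have hev : v =ᶠ[nhds (0:ℝ)]
        (fun x => -(1 / γ ^ 2) * (-(1 / (8 * (N : ℝ) ^ 2)) + x ^ 2 / 2 + 0)) := by
      refine Filter.eventuallyEq_of_mem hmem (fun x hx => ?_)
      have hx' : x < (1:ℝ)/(2*N) := hx
      rw [hv x, Finset.sum_eq_zero (fun k hk => by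
        obtain ⟨hk1, _⟩ := Finset.mem_Icc.mp hk
        have h1 : (1:ℝ) ≤ (k:ℝ) := by exact_mod_cast hk1
        have hle : (1:ℝ)/(2*N) ≤ (2*(k:ℝ)-1)/(2*N) := by gcongr <;> linarith
        rw [hH0 _ (by linarith), mul_zero])]
    rw [hev.deriv_eq]
    have h2 : HasDerivAt (fun x:ℝ => x^2) (2 * 0 ^ 1) (0:ℝ) := by
      simpa using hasDerivAt_pow 2 (0:ℝ)
    have h3 := (((h2.div_const 2).const_add (-(1 / (8 * (N : ℝ) ^ 2)))).add_const 0).const_mul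
        (-(1 / γ ^ 2))
    rw [h3.deriv]
    norm_num
  · -- derivative at 1
    have htop : (2*(N:ℝ)-1)/(2*N) < 1 := by
      rw [div_lt_one (by linarith)]; linarith
    have hmem : Set.Ioi ((2*(N:ℝ)-1)/(2*N)) ∈ nhds (1:ℝ) := Ioi_mem_nhds htop
    have hev : v =ᶠ[nhds (1:ℝ)]
        (fun x => -(1 / γ ^ 2) * (-(1 / (8 * (N : ℝ) ^ 2)) + x ^ 2 / 2 +
          ∑ k ∈ Finset.Icc 1 N, (-1 : ℝ) ^ k * (x - (2 * (k : ℝ) - 1) / (2 * N)) ^ 2)) := by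
      refine Filter.eventuallyEq_of_mem hmem (fun x hx => ?_)
      have hx' : (2*(N:ℝ)-1)/(2*N) < x := hx
      rw [hv x]
      congr 1
      congr 1
      refine Finset.sum_congr rfl (fun k hk => ?_)
      obtain ⟨_, hk2⟩ := Finset.mem_Icc.mp hk
      have h2 : (k:ℝ) ≤ (N:ℝ) := by exact_mod_cast hk2
      have hle : (2*(k:ℝ)-1)/(2*N) ≤ (2*(N:ℝ)-1)/(2*N) := by gcongr
      rw [hH1 _ (by linarith), mul_one]
    rw [hev.deriv_eq]
    have hS : HasDerivAt (fun x:ℝ => ∑ k ∈ Finset.Icc 1 N,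
        (-1 : ℝ) ^ k * (x - (2 * (k : ℝ) - 1) / (2 * N)) ^ 2)
        (∑ k ∈ Finset.Icc 1 N,
          (-1 : ℝ) ^ k * (2 * (1 - (2 * (k : ℝ) - 1) / (2 * N)) ^ 1 * 1)) 1 := by
      refine HasDerivAt.fun_sum (fun k _ => ?_)
      exact (((hasDerivAt_id (1:ℝ)).sub_const _).pow 2).const_mul _
    have h2 : HasDerivAt (fun x:ℝ => x^2) (2 * 1 ^ 1) (1:ℝ) := by
      simpa using hasDerivAt_pow 2 (1:ℝ)
    have h3 := (((h2.div_const 2).const_add (-(1 / (8 * (N : ℝ) ^ 2)))).fun_add hS).const_mul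
        (-(1 / γ ^ 2))
    rw [h3.deriv]
    have hre : ∑ k ∈ Finset.Icc 1 N,
        (-1 : ℝ) ^ k * (2 * (1 - (2 * (k : ℝ) - 1) / (2 * N)) ^ 1 * 1)
        = 2 * ∑ k ∈ Finset.Icc 1 N, (-1:ℝ)^k * (1 - (2*(k:ℝ)-1)/(2*N)) := by
      rw [Finset.mul_sum]
      exact Finset.sum_congr rfl (fun k _ => by ring)
    rw [hre, hsum1]
    norm_num
  · -- the integral
    have hmax : ∀ x c : ℝ, (x - c)^2 * H (x - c) = (max (x - c) 0)^2 := by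
      intro x c
      rw [hH]
      split_ifs with h
      · rw [max_eq_left h, mul_one]
      · rw [max_eq_right (le_of_lt (not_le.mp h))]
        simp
    have hveq : ∀ x : ℝ, v x = -(1 / γ ^ 2) * (-(1 / (8 * (N : ℝ) ^ 2)) + x ^ 2 / 2 +
        ∑ k ∈ Finset.Icc 1 N,
          (-1 : ℝ) ^ k * (max (x - (2 * (k : ℝ) - 1) / (2 * N)) 0) ^ 2) := by
      intro x
      rw [hv x]
      congr 1
      congr 1
      exact Finset.sum_congr rfl (fun k _ => by rw [mul_assoc, hmax])
    have hcont : ∀ k : ℕ, Continuous fun x : ℝ =>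
        (-1:ℝ)^k * (max (x - (2*(k:ℝ)-1)/(2*N)) 0)^2 := fun k =>
      continuous_const.mul (((continuous_id.sub continuous_const).max continuous_const).pow 2)
    rw [intervalIntegral.integral_congr (fun x _ => hveq x)]
    rw [intervalIntegral.integral_const_mul]
    have hint1 : IntervalIntegrable (fun x : ℝ => -(1 / (8 * (N : ℝ) ^ 2)) + x ^ 2 / 2)
        MeasureTheory.volume 0 1 :=
      (continuous_const.add ((continuous_pow 2).div_const 2)).intervalIntegrable _ _
    have hintS : IntervalIntegrable (fun x : ℝ => ∑ k ∈ Finset.Icc 1 N,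
        (-1:ℝ)^k * (max (x - (2*(k:ℝ)-1)/(2*N)) 0)^2) MeasureTheory.volume 0 1 :=
      (continuous_finset_sum _ (fun k _ => hcont k)).intervalIntegrable _ _
    rw [intervalIntegral.integral_add hint1 hintS]
    rw [intervalIntegral.integral_add intervalIntegrable_const
        (((continuous_pow 2).div_const 2).intervalIntegrable _ _)]
    rw [intervalIntegral.integral_const, intervalIntegral.integral_div, integral_pow]
    rw [intervalIntegral.integral_finset_sum (fun k _ => (hcont k).intervalIntegrable _ _)]
    have hterm : ∀ k ∈ Finset.Icc 1 N,
        (∫ x in (0:ℝ)..1, (-1:ℝ)^k * (max (x - (2*(k:ℝ)-1)/(2*N)) 0)^2)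
        = (-1:ℝ)^k * ((1 - (2*(k:ℝ)-1)/(2*N))^3 / 3) := by
      intro k hk
      have hc0 : (0:ℝ) ≤ (2*(k:ℝ)-1)/(2*N) := (hxk_pos k hk).le
      have hc1 : (2*(k:ℝ)-1)/(2*N) ≤ 1 := hxk_le k hk
      set c := (2*(k:ℝ)-1)/(2*N) with hc
      rw [intervalIntegral.integral_const_mul]
      congr 1
      have hI1 : (∫ x in (0:ℝ)..c, (max (x - c) 0)^2) = 0 := by
        rw [intervalIntegral.integral_congr (g := fun _ => (0:ℝ)) (fun x hx => ?_)]
        · simp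
        · rw [Set.uIcc_of_le hc0] at hx
          have : x ≤ c := hx.2
          rw [max_eq_right (by linarith)]
          simp
      have hI2 : (∫ x in c..(1:ℝ), (max (x - c) 0)^2) = (1 - c)^3 / 3 := by
        rw [intervalIntegral.integral_congr (g := fun x => (x - c)^2) (fun x hx => ?_)]
        · rw [intervalIntegral.integral_comp_sub_right (fun x => x^2) c, sub_self, integral_pow]
          norm_num
        · rw [Set.uIcc_of_le hc1] at hx
          have : c ≤ x := hx.1
          rw [max_eq_left (by linarith)]
      have hcmax : Continuous fun x : ℝ => (max (x - c) 0) ^ 2 :=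
        ((continuous_id.sub continuous_const).max continuous_const).pow 2
      have hsplit := intervalIntegral.integral_add_adjacent_intervals
        (μ := MeasureTheory.volume)
        (hcmax.intervalIntegrable 0 c) (hcmax.intervalIntegrable c 1)
      rw [← hsplit, hI1, hI2, zero_add]
    rw [Finset.sum_congr rfl hterm]
    have hdiv : ∑ k ∈ Finset.Icc 1 N, (-1:ℝ)^k * ((1 - (2*(k:ℝ)-1)/(2*N))^3 / 3)
        = (∑ k ∈ Finset.Icc 1 N, (-1:ℝ)^k * (1 - (2*(k:ℝ)-1)/(2*N))^3) / 3 := by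
      rw [Finset.sum_div]
      exact Finset.sum_congr rfl (fun k _ => by ring)
    rw [hdiv, hsum3]
    apply mul_eq_zero_of_right
    field_simp
    ring_nf
    field_simp
    ring
end

section
/- For the equi-distributed lamellar function U_N with N even, the nonlocal energy K(U_N) = (1/2)∫_0^1 v(x) U_N(x) dx equals 1/(24γ²N²), where v(x) = −(1/γ²)(−1/(8N²) + x²/2 + ∑_{k=1}^{N}(−1)^k (x−x_k)² H(x−x_k)) and x_k = (2k−1)/(2N). -/
open Finset MeasureTheory intervalIntegral

lemma auxL0 (N : ℕ) : ∑ k ∈ Icc 1 N, (-1:ℝ)^k = ((-1)^N - 1)/2 := by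
  induction N with
  | zero => simp
  | succ n ih =>
    rw [Finset.sum_Icc_succ_top (by omega), ih]
    rcases Nat.even_or_odd n with h | h
    · simp [h.neg_one_pow, (h.add_one).neg_one_pow]
      ring
    · simp [h.neg_one_pow, (Odd.add_one h).neg_one_pow]
      ring

lemma auxL1 (N : ℕ) : ∑ k ∈ Icc 1 N, (-1:ℝ)^k * k = ((-1)^N * (2*N+1) - 1)/4 := by
  induction N with
  | zero => simp
  | succ n ih =>
    rw [Finset.sum_Icc_succ_top (by omega), ih]
    rcases Nat.even_or_odd n with h | h
    · simp only [h.neg_one_pow, (h.add_one).neg_one_pow]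
      push_cast; ring
    · simp only [h.neg_one_pow, (Odd.add_one h).neg_one_pow]
      push_cast; ring

lemma auxL2 (N : ℕ) : ∑ k ∈ Icc 1 N, (-1:ℝ)^k * k^2 = (-1)^N * N*(N+1)/2 := by
  induction N with
  | zero => simp
  | succ n ih =>
    rw [Finset.sum_Icc_succ_top (by omega), ih]
    rcases Nat.even_or_odd n with h | h
    · simp only [h.neg_one_pow, (h.add_one).neg_one_pow]
      push_cast; ring
    · simp only [h.neg_one_pow, (Odd.add_one h).neg_one_pow]
      push_cast; ring

lemma auxL3 (N : ℕ) : ∑ k ∈ Icc 1 N, (-1:ℝ)^k * k^3 = ((-1)^N * (4*(N:ℝ)^3+6*(N:ℝ)^2-1)+1)/8 := by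
  induction N with
  | zero => simp
  | succ n ih =>
    rw [Finset.sum_Icc_succ_top (by omega), ih]
    rcases Nat.even_or_odd n with h | h
    · simp only [h.neg_one_pow, (h.add_one).neg_one_pow]
      push_cast; ring
    · simp only [h.neg_one_pow, (Odd.add_one h).neg_one_pow]
      push_cast; ring



lemma auxE (N : ℕ) : ∑ j ∈ Icc 1 N, ∑ k ∈ Icc 1 N, (-1:ℝ)^(j+k) * ((max j k : ℝ) - k)^3
    = ((-1)^N*(3*(N:ℝ)-2*(N:ℝ)^3)+(N:ℝ))/8 := by
  induction N with
  | zero => simp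
  | succ n ih =>
    rw [Finset.sum_Icc_succ_top (by omega)]
    push_cast
    have h1 : ∀ j ∈ Icc 1 n, ∑ k ∈ Icc 1 (n+1), (-1:ℝ)^(j+k) * (max (j:ℝ) (k:ℝ) - k)^3
        = ∑ k ∈ Icc 1 n, (-1:ℝ)^(j+k) * (max (j:ℝ) (k:ℝ) - k)^3 := by
      intro j hj
      rw [Finset.sum_Icc_succ_top (by omega)]
      have hj' : (j:ℝ) ≤ (n:ℝ)+1 := by
        have := (Finset.mem_Icc.mp hj).2
        have : (j:ℝ) ≤ (n:ℝ) := by exact_mod_cast this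
        linarith
      push_cast
      rw [max_eq_right hj']
      simp
    rw [Finset.sum_congr rfl h1, ih]
    have h2 : ∀ k ∈ Icc 1 (n+1), (-1:ℝ)^(n+1+k) * (max ((n:ℝ)+1) (k:ℝ) - k)^3
        = (-1:ℝ)^(n+1) * ( ((n:ℝ)+1)^3 * (-1)^k
          - 3*((n:ℝ)+1)^2*((-1)^k*k)
          + 3*((n:ℝ)+1)*((-1)^k*k^2)
          - (-1)^k*k^3 ) := by
      intro k hk
      have hk' : (k:ℝ) ≤ (n:ℝ)+1 := by
        have := (Finset.mem_Icc.mp hk).2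
        have h' : (k:ℝ) ≤ ((n+1:ℕ):ℝ) := by exact_mod_cast this
        push_cast at h'; linarith
      rw [max_eq_left hk', pow_add]
      ring
    rw [Finset.sum_congr rfl h2]
    simp only [Finset.sum_sub_distrib, Finset.sum_add_distrib, ← Finset.mul_sum]
    rw [auxL0, auxL1, auxL2, auxL3]
    rcases Nat.even_or_odd n with h | h
    · simp only [h.neg_one_pow, (h.add_one).neg_one_pow]
      push_cast; ring
    · simp only [h.neg_one_pow, (Odd.add_one h).neg_one_pow]
      push_cast; ring

lemma auxInd (H : ℝ → ℝ) (hH : ∀ t, H t = if 0 ≤ t then 1 else 0) (f : ℝ → ℝ) (a : ℝ) :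
    (fun x => H (x - a) * f x) = (Set.Ici a).indicator f := by
  funext x
  by_cases h : a ≤ x
  · rw [hH, if_pos (by linarith), Set.indicator_of_mem (Set.mem_Ici.2 h), one_mul]
  · rw [hH, if_neg (by intro hc; exact h (by linarith)),
      Set.indicator_of_notMem (by simpa using h), zero_mul]

lemma auxHI (H : ℝ → ℝ) (hH : ∀ t, H t = if 0 ≤ t then 1 else 0) (f : ℝ → ℝ)
    (hf : Continuous f) (a u v : ℝ) :
    IntervalIntegrable (fun x => H (x - a) * f x) volume u v := by
  rw [auxInd H hH f a, intervalIntegrable_iff]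
  exact (intervalIntegrable_iff.mp (hf.intervalIntegrable u v)).indicator measurableSet_Ici

lemma auxH (H : ℝ → ℝ) (hH : ∀ t, H t = if 0 ≤ t then 1 else 0) (f : ℝ → ℝ)
    (hf : Continuous f) (a : ℝ) (h0 : 0 ≤ a) (h1 : a ≤ 1) :
    ∫ x in (0:ℝ)..1, H (x - a) * f x = ∫ x in a..1, f x := by
  rw [← integral_add_adjacent_intervals (auxHI H hH f hf a 0 a) (auxHI H hH f hf a a 1)]
  have e1 : ∫ x in (0:ℝ)..a, H (x - a) * f x = 0 := by
    apply integral_zero_ae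
    rw [MeasureTheory.ae_iff]
    refine measure_mono_null ?_ (measure_singleton a)
    intro x hx
    simp only [Set.mem_setOf_eq, not_forall] at hx
    obtain ⟨hmem, hne⟩ := hx
    rw [Set.uIoc_of_le h0] at hmem
    rcases lt_or_eq_of_le hmem.2 with h | h
    · exact absurd (by rw [hH, if_neg (by linarith), zero_mul]) hne
    · exact h
  have e2 : ∫ x in a..1, H (x - a) * f x = ∫ x in a..1, f x := by
    apply integral_congr
    intro x hx
    rw [Set.uIcc_of_le h1] at hx
    show H (x - a) * f x = f x
    rw [hH, if_pos (by linarith [hx.1]), one_mul]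
  rw [e1, e2, zero_add]

lemma auxQ (a t : ℝ) : ∫ x in a..(1:ℝ), (x - t)^2 = ((1-t)^3 - (a-t)^3)/3 := by
  rw [intervalIntegral.integral_comp_sub_right (fun x => x^2) t, integral_pow]
  norm_num

lemma auxP (a c : ℝ) : (∫ x in a..(1:ℝ), (c + x^2/2)) = c*(1-a) + (1 - a^3)/6 := by
  rw [intervalIntegral.integral_add (intervalIntegrable_const)
    (((continuous_pow 2).div_const 2).intervalIntegrable a 1)]
  simp only [intervalIntegral.integral_div, integral_pow, intervalIntegral.integral_const,
    smul_eq_mul]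
  ring

lemma auxHQ (H : ℝ → ℝ) (hH : ∀ t, H t = if 0 ≤ t then 1 else 0) (a t r : ℝ)
    (h0 : 0 ≤ a) (h1 : a ≤ 1) :
    ∫ x in (0:ℝ)..1, H (x - a) * (r * (x - t)^2) = r * (((1-t)^3 - (a-t)^3)/3) := by
  rw [auxH H hH _ (by continuity) a h0 h1, intervalIntegral.integral_const_mul, auxQ]

lemma auxHP (H : ℝ → ℝ) (hH : ∀ t, H t = if 0 ≤ t then 1 else 0) (a r c : ℝ)
    (h0 : 0 ≤ a) (h1 : a ≤ 1) :
    ∫ x in (0:ℝ)..1, H (x - a) * (r * (c + x^2/2)) = r * (c*(1-a) + (1-a^3)/6) := by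
  rw [auxH H hH _ (by continuity) a h0 h1, intervalIntegral.integral_const_mul, auxP]


lemma auxSumII {ι : Type*} (s : Finset ι) (f : ι → ℝ → ℝ)
    (h : ∀ i ∈ s, IntervalIntegrable (f i) volume 0 1) :
    IntervalIntegrable (fun x => ∑ i ∈ s, f i x) volume 0 1 := by
  have h2 := IntervalIntegrable.sum s h
  have he : (∑ i ∈ s, f i) = fun x => ∑ i ∈ s, f i x := by funext x; simp
  rwa [he] at h2


set_option maxHeartbeats 2000000 in
theorem stmt_13 (γ : ℝ) (hγ : 0 < γ) (N : ℕ) (hN : 2 ≤ N) (hNe : Even N)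
    (H : ℝ → ℝ) (hH : ∀ t, H t = if 0 ≤ t then 1 else 0)
    (U : ℝ → ℝ)
    (hU : ∀ x, U x = 1 + 2 * ∑ k ∈ Finset.Icc 1 N,
      (-1 : ℝ) ^ k * H (x - (2 * (k : ℝ) - 1) / (2 * N)))
    (v : ℝ → ℝ)
    (hv : ∀ x, v x = -(1 / γ ^ 2) * (-(1 / (8 * (N : ℝ) ^ 2)) + x ^ 2 / 2 +
      ∑ k ∈ Finset.Icc 1 N,
        (-1 : ℝ) ^ k * (x - (2 * (k : ℝ) - 1) / (2 * N)) ^ 2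
          * H (x - (2 * (k : ℝ) - 1) / (2 * N)))) :
    (1 / 2) * ∫ x in (0:ℝ)..1, U x * v x = 1 / (24 * γ ^ 2 * (N : ℝ) ^ 2) := by
  have hγ2 : (γ:ℝ)^2 ≠ 0 := pow_ne_zero 2 (ne_of_gt hγ)
  have hn0 : (0:ℝ) < (N:ℝ) := by exact_mod_cast (show 0 < N by omega)
  have hn : (N:ℝ) ≠ 0 := ne_of_gt hn0
  have hNpow : (-1:ℝ)^N = 1 := hNe.neg_one_pow
  have hak0 : ∀ k ∈ Icc 1 N, 0 ≤ (2*(k:ℝ)-1)/(2*(N:ℝ)) := by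
    intro k hk
    have h1 : 1 ≤ (k:ℝ) := by exact_mod_cast (Finset.mem_Icc.mp hk).1
    apply div_nonneg (by linarith) (by linarith)
  have hak1 : ∀ k ∈ Icc 1 N, (2*(k:ℝ)-1)/(2*(N:ℝ)) ≤ 1 := by
    intro k hk
    have h2 : (k:ℝ) ≤ (N:ℝ) := by exact_mod_cast (Finset.mem_Icc.mp hk).2
    rw [div_le_one (by linarith)]
    linarith
  have hprod : ∀ s t x : ℝ, H (x - s) * H (x - t) = H (x - max s t) := by
    intro s t x
    simp only [hH, sub_nonneg, max_le_iff]
    by_cases h1 : s ≤ x <;> by_cases h2 : t ≤ x <;> simp [h1, h2]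
  set c : ℝ := -(1/(8*(N:ℝ)^2)) with hc
  -- the four pieces of the integrand
  set S2 : ℝ → ℝ := fun x => ∑ k ∈ Icc 1 N,
    H (x - (2*(k:ℝ)-1)/(2*(N:ℝ))) * ((-1:ℝ)^k * (x - (2*(k:ℝ)-1)/(2*(N:ℝ)))^2) with hS2
  set S3 : ℝ → ℝ := fun x => ∑ j ∈ Icc 1 N,
    H (x - (2*(j:ℝ)-1)/(2*(N:ℝ))) * (2*(-1:ℝ)^j * (c + x^2/2)) with hS3
  set S4 : ℝ → ℝ := fun x => ∑ j ∈ Icc 1 N, ∑ k ∈ Icc 1 N,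
    H (x - max ((2*(j:ℝ)-1)/(2*(N:ℝ))) ((2*(k:ℝ)-1)/(2*(N:ℝ)))) *
      (2*(-1:ℝ)^j*(-1:ℝ)^k * (x - (2*(k:ℝ)-1)/(2*(N:ℝ)))^2) with hS4
  have hUv : ∀ x : ℝ, U x * v x = -(1/γ^2) * ((c + x^2/2) + S2 x + S3 x + S4 x) := by
    intro x
    rw [hU x, hv x]
    simp only [hS2, hS3, hS4]
    have w2 : (∑ k ∈ Icc 1 N,
        H (x - (2*(k:ℝ)-1)/(2*(N:ℝ))) * ((-1:ℝ)^k * (x - (2*(k:ℝ)-1)/(2*(N:ℝ)))^2))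
        = ∑ k ∈ Icc 1 N, (-1:ℝ)^k * (x - (2*(k:ℝ)-1)/(2*(N:ℝ)))^2
            * H (x - (2*(k:ℝ)-1)/(2*(N:ℝ))) :=
      Finset.sum_congr rfl fun k _ => by ring
    have w3 : (∑ j ∈ Icc 1 N, H (x - (2*(j:ℝ)-1)/(2*(N:ℝ))) * (2*(-1:ℝ)^j * (c + x^2/2)))
        = 2*(c + x^2/2) * ∑ j ∈ Icc 1 N, (-1:ℝ)^j * H (x - (2*(j:ℝ)-1)/(2*(N:ℝ))) := by
      rw [Finset.mul_sum]
      exact Finset.sum_congr rfl fun j _ => by ring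
    have w4 : (2:ℝ) * (∑ j ∈ Icc 1 N, (-1:ℝ)^j * H (x - (2*(j:ℝ)-1)/(2*(N:ℝ))))
        * (∑ k ∈ Icc 1 N, (-1:ℝ)^k * (x - (2*(k:ℝ)-1)/(2*(N:ℝ)))^2
            * H (x - (2*(k:ℝ)-1)/(2*(N:ℝ))))
        = ∑ j ∈ Icc 1 N, ∑ k ∈ Icc 1 N,
            H (x - max ((2*(j:ℝ)-1)/(2*(N:ℝ))) ((2*(k:ℝ)-1)/(2*(N:ℝ)))) *
              (2*(-1:ℝ)^j*(-1:ℝ)^k * (x - (2*(k:ℝ)-1)/(2*(N:ℝ)))^2) := by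
      rw [mul_assoc, Finset.sum_mul_sum]
      simp only [Finset.mul_sum]
      apply Finset.sum_congr rfl
      intro j _
      apply Finset.sum_congr rfl
      intro k _
      rw [← hprod ((2*(j:ℝ)-1)/(2*(N:ℝ))) ((2*(k:ℝ)-1)/(2*(N:ℝ))) x]
      ring
    rw [w2, w3, ← w4]
    ring
  -- integrability helpers
  have hii1 : IntervalIntegrable (fun x : ℝ => c + x^2/2) volume 0 1 :=
    (continuous_const.add ((continuous_pow 2).div_const 2)).intervalIntegrable 0 1
  have hii2 : IntervalIntegrable S2 volume 0 1 := by
    simp only [hS2]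
    exact auxSumII _ _ (fun k _ => auxHI H hH _ (by fun_prop) _ 0 1)
  have hii3 : IntervalIntegrable S3 volume 0 1 := by
    simp only [hS3]
    exact auxSumII _ _ (fun j _ => auxHI H hH _ (by fun_prop) _ 0 1)
  have hii4 : IntervalIntegrable S4 volume 0 1 := by
    simp only [hS4]
    exact auxSumII _ _ (fun j _ => auxSumII _ _ (fun k _ => auxHI H hH _ (by fun_prop) _ 0 1))
  -- values of the four integrals
  have i1 : (∫ x in (0:ℝ)..1, (c + x^2/2)) = c + 1/6 := by rw [auxP]; norm_num
  have i2 : (∫ x in (0:ℝ)..1, S2 x) = ∑ k ∈ Icc 1 N,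
      (-1:ℝ)^k * (((1 - (2*(k:ℝ)-1)/(2*(N:ℝ)))^3
        - ((2*(k:ℝ)-1)/(2*(N:ℝ)) - (2*(k:ℝ)-1)/(2*(N:ℝ)))^3)/3) := by
    simp only [hS2]
    rw [intervalIntegral.integral_finset_sum (fun k _ => auxHI H hH _ (by fun_prop) _ 0 1)]
    exact Finset.sum_congr rfl fun k hk => auxHQ H hH _ _ _ (hak0 k hk) (hak1 k hk)
  have i3 : (∫ x in (0:ℝ)..1, S3 x) = ∑ j ∈ Icc 1 N,
      (2*(-1:ℝ)^j) * (c*(1 - (2*(j:ℝ)-1)/(2*(N:ℝ))) + (1 - ((2*(j:ℝ)-1)/(2*(N:ℝ)))^3)/6) := by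
    simp only [hS3]
    rw [intervalIntegral.integral_finset_sum (fun j _ => auxHI H hH _ (by fun_prop) _ 0 1)]
    exact Finset.sum_congr rfl fun j hj => auxHP H hH _ _ _ (hak0 j hj) (hak1 j hj)
  have i4 : (∫ x in (0:ℝ)..1, S4 x) = ∑ j ∈ Icc 1 N, ∑ k ∈ Icc 1 N,
      (2*(-1:ℝ)^j*(-1:ℝ)^k) * (((1 - (2*(k:ℝ)-1)/(2*(N:ℝ)))^3
        - (max ((2*(j:ℝ)-1)/(2*(N:ℝ))) ((2*(k:ℝ)-1)/(2*(N:ℝ)))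
            - (2*(k:ℝ)-1)/(2*(N:ℝ)))^3)/3) := by
    simp only [hS4]
    rw [intervalIntegral.integral_finset_sum
      (fun j _ => auxSumII _ _ (fun k _ => auxHI H hH _ (by fun_prop) _ 0 1))]
    refine Finset.sum_congr rfl fun j hj => ?_
    rw [intervalIntegral.integral_finset_sum (fun k _ => auxHI H hH _ (by fun_prop) _ 0 1)]
    refine Finset.sum_congr rfl fun k hk => ?_
    exact auxHQ H hH _ _ _ (le_trans (hak0 j hj) (le_max_left _ _))
      (max_le (hak1 j hj) (hak1 k hk))
  -- the full integral
  have hWint : (∫ x in (0:ℝ)..1, U x * v x) = -(1/γ^2) *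
      ((c + 1/6) + (∫ x in (0:ℝ)..1, S2 x) + (∫ x in (0:ℝ)..1, S3 x)
        + (∫ x in (0:ℝ)..1, S4 x)) := by
    rw [intervalIntegral.integral_congr
      (g := fun x => -(1/γ^2) * ((c + x^2/2) + S2 x + S3 x + S4 x)) (fun x _ => hUv x)]
    rw [intervalIntegral.integral_const_mul,
      intervalIntegral.integral_add ((hii1.add hii2).add hii3) hii4,
      intervalIntegral.integral_add (hii1.add hii2) hii3,
      intervalIntegral.integral_add hii1 hii2, i1]
  -- final algebra
  have hSA : (∑ k ∈ Icc 1 N,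
      (-1:ℝ)^k * (((1 - (2*(k:ℝ)-1)/(2*(N:ℝ)))^3
        - ((2*(k:ℝ)-1)/(2*(N:ℝ)) - (2*(k:ℝ)-1)/(2*(N:ℝ)))^3)/3))
      = ∑ k ∈ Icc 1 N, ((1/3 + 1/(2*(N:ℝ)) + 1/(4*(N:ℝ)^2) + 1/(24*(N:ℝ)^3)) * (-1:ℝ)^k
        + (-(1/(N:ℝ) + 1/(N:ℝ)^2 + 1/(4*(N:ℝ)^3))) * ((-1:ℝ)^k * (k:ℝ))
        + (1/(N:ℝ)^2 + 1/(2*(N:ℝ)^3)) * ((-1:ℝ)^k * (k:ℝ)^2)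
        + (-(1/(3*(N:ℝ)^3))) * ((-1:ℝ)^k * (k:ℝ)^3)) :=
    Finset.sum_congr rfl fun k _ => by field_simp; ring
  have hSB : (∑ j ∈ Icc 1 N,
      (2*(-1:ℝ)^j) * (c*(1 - (2*(j:ℝ)-1)/(2*(N:ℝ))) + (1 - ((2*(j:ℝ)-1)/(2*(N:ℝ)))^3)/6))
      = ∑ j ∈ Icc 1 N, ((1/3 - 1/(4*(N:ℝ)^2) - 1/(12*(N:ℝ)^3)) * (-1:ℝ)^j
        + (1/(2*(N:ℝ)^3)) * ((-1:ℝ)^j * (j:ℝ)^2)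
        + (-(1/(3*(N:ℝ)^3))) * ((-1:ℝ)^j * (j:ℝ)^3)) :=
    Finset.sum_congr rfl fun j _ => by rw [hc]; field_simp; ring
  have e4 : ∀ j ∈ Icc 1 N, ∀ k ∈ Icc 1 N,
      (2*(-1:ℝ)^j*(-1:ℝ)^k) * (((1 - (2*(k:ℝ)-1)/(2*(N:ℝ)))^3
        - (max ((2*(j:ℝ)-1)/(2*(N:ℝ))) ((2*(k:ℝ)-1)/(2*(N:ℝ)))
            - (2*(k:ℝ)-1)/(2*(N:ℝ)))^3)/3)
      = (-1:ℝ)^j * (2*((-1:ℝ)^k * ((1 - (2*(k:ℝ)-1)/(2*(N:ℝ)))^3/3)))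
        - (2/(3*(N:ℝ)^3)) * ((-1:ℝ)^(j+k) * ((max j k : ℝ) - (k:ℝ))^3) := by
    intro j hj k hk
    have hmx : max ((2*(j:ℝ)-1)/(2*(N:ℝ))) ((2*(k:ℝ)-1)/(2*(N:ℝ)))
        = (2*(max (j:ℝ) (k:ℝ))-1)/(2*(N:ℝ)) := by
      rcases le_total (j:ℝ) (k:ℝ) with h | h
      · rw [max_eq_right h, max_eq_right ((div_le_div_iff_of_pos_right (by linarith)).mpr (by linarith))]
      · rw [max_eq_left h, max_eq_left ((div_le_div_iff_of_pos_right (by linarith)).mpr (by linarith))]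
    rw [hmx, pow_add]
    field_simp
    ring
  have hD1 : (∑ j ∈ Icc 1 N, ∑ k ∈ Icc 1 N,
      (2*(-1:ℝ)^j*(-1:ℝ)^k) * (((1 - (2*(k:ℝ)-1)/(2*(N:ℝ)))^3
        - (max ((2*(j:ℝ)-1)/(2*(N:ℝ))) ((2*(k:ℝ)-1)/(2*(N:ℝ)))
            - (2*(k:ℝ)-1)/(2*(N:ℝ)))^3)/3))
      = (∑ j ∈ Icc 1 N, (-1:ℝ)^j) *
          (∑ k ∈ Icc 1 N, 2*((-1:ℝ)^k * ((1 - (2*(k:ℝ)-1)/(2*(N:ℝ)))^3/3)))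
        - (2/(3*(N:ℝ)^3)) * ∑ j ∈ Icc 1 N, ∑ k ∈ Icc 1 N,
            (-1:ℝ)^(j+k) * ((max j k : ℝ) - (k:ℝ))^3 := by
    rw [Finset.sum_mul_sum]
    simp only [Finset.mul_sum]
    rw [← Finset.sum_sub_distrib]
    refine Finset.sum_congr rfl fun j hj => ?_
    rw [← Finset.sum_sub_distrib]
    exact Finset.sum_congr rfl fun k hk => e4 j hj k hk
  rw [hWint, i2, i3, i4, hSA, hSB, hD1, auxE]
  simp only [Finset.sum_add_distrib, ← Finset.mul_sum]
  rw [auxL0, auxL1, auxL2, auxL3, hNpow, hc]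
  field_simp
  ring
end
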